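/- Let G be a Lie group with Lie algebra 𝔤, H a closed subgroup with Lie algebra 𝔥, and g ∈ G. If xH is a fixed point of l_{g⁻¹} : G/H → G/H and h ∈ h(g,xH) is an element of the associated conjugacy class in H, then det(1 − d(l_{g⁻¹})_{xH}) = det(1 − Ad^G_H(h)), where Ad^G_H : H → Aut(𝔤/𝔥) is the isotropy action of H on 𝔤/𝔥 induced by the adjoint representation. -/

import Mathlib

open Manifold

/-- Let `G` be a Lie group, `H` a closed subgroup (with `G/H` a smooth
manifold on which `G` acts smoothly), and `g ∈ G`. If `xH` is a fixed point of
`l_{g⁻¹} : G/H → G/H` and `h` is an element of the associated conjugacy class in `H`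
(i.e. `g⁻¹x = xh`), then `det(1 - d(l_{g⁻¹})_{xH}) = det(1 - Ad^G_H(h))`, where the
isotropy action `Ad^G_H(h)` of `H` on `𝔤/𝔥 ≅ T_{eH}(G/H)` is realized as the
differential `d(l_h)_{eH}` of the left translation by `h` at the base point. -/
theorem det_one_sub_differential_eq_det_one_sub_isotropy
    {E : Type*} [NormedAddCommGroup E] [NormedSpace ℝ E]
    {HE : Type*} [TopologicalSpace HE] (I : ModelWithCorners ℝ E HE)
    {F : Type*} [NormedAddCommGroup F] [NormedSpace ℝ F]
    {HF : Type*} [TopologicalSpace HF] (J : ModelWithCorners ℝ F HF)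
    {G : Type*} [Group G] [TopologicalSpace G] [ChartedSpace HE G] [LieGroup I (⊤ : ℕ∞) G]
    (K : Subgroup G) (hclosed : IsClosed (K : Set G))
    [ChartedSpace HF (G ⧸ K)] [IsManifold J (⊤ : ℕ∞) (G ⧸ K)]
    (hsmooth : ContMDiff (I.prod J) J (⊤ : ℕ∞) (fun p : G × (G ⧸ K) => p.1 • p.2))
    (g x h : G) (hh : h ∈ K) (hfix : g⁻¹ * x = x * h) :
    LinearMap.det ((ContinuousLinearMap.id ℝ F) -
        (show F →L[ℝ] F from
          mfderiv J J (fun q : G ⧸ K => g⁻¹ • q) ((x : G ⧸ K)))).toLinearMap =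
      LinearMap.det ((ContinuousLinearMap.id ℝ F) -
        (show F →L[ℝ] F from
          mfderiv J J (fun q : G ⧸ K => h • q) (((1 : G) : G ⧸ K)))).toLinearMap := by
  -- smoothness of all translations
  have smooth : ∀ a : G, ContMDiff J J (⊤ : ℕ∞) (fun q : G ⧸ K => a • q) := fun a =>
    hsmooth.comp (contMDiff_const.prodMk contMDiff_id)
  have hd : ∀ (a : G) (q : G ⧸ K), MDifferentiableAt J J (fun q : G ⧸ K => a • q) q :=
    fun a q => ((smooth a).contMDiffAt).mdifferentiableAt (by simp)
  -- points
  have hg : g⁻¹ = x * h * x⁻¹ := by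
    rw [← hfix]; group
  have hmem : ((h : G ⧸ K)) = ((1 : G) : G ⧸ K) :=
    QuotientGroup.eq.mpr (by simpa using K.inv_mem hh)
  have hp1 : x⁻¹ • ((x : G) : G ⧸ K) = ((1 : G) : G ⧸ K) := by
    show ((x⁻¹ * x : G) : G ⧸ K) = _
    rw [inv_mul_cancel]
  have hp2 : h • (((1 : G) : G ⧸ K)) = ((1 : G) : G ⧸ K) := by
    show ((h * 1 : G) : G ⧸ K) = _
    rw [mul_one, hmem]
  -- congruence helper (tangent spaces are all definitionally `F`)
  have keyf : ∀ (f f' : G ⧸ K → G ⧸ K) (p p' : G ⧸ K), f = f' → p = p' →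
      (mfderiv J J f p : F →L[ℝ] F) = (mfderiv J J f' p' : F →L[ℝ] F) := by
    rintro f f' p p' rfl rfl; rfl
  -- abbreviations for the derivatives
  set A : F →L[ℝ] F := mfderiv J J (fun q : G ⧸ K => h • q) (((1 : G) : G ⧸ K)) with hA
  set C : F →L[ℝ] F := mfderiv J J (fun q : G ⧸ K => x • q) (((1 : G) : G ⧸ K)) with hC
  set C' : F →L[ℝ] F := mfderiv J J (fun q : G ⧸ K => x⁻¹ • q) ((x : G ⧸ K)) with hC'
  -- chain rule: derivative of l_{g⁻¹} at xK equals C ∘ A ∘ C'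
  have hfun : (fun q : G ⧸ K => g⁻¹ • q) =
      (fun q : G ⧸ K => x • q) ∘ (fun q : G ⧸ K => h • q) ∘ (fun q : G ⧸ K => x⁻¹ • q) := by
    funext q
    simp [hg, mul_smul, Function.comp]
  have hchain : (mfderiv J J (fun q : G ⧸ K => g⁻¹ • q) ((x : G ⧸ K)) : F →L[ℝ] F)
      = (C.comp A).comp C' := by
    have eC : C = mfderiv J J (fun q : G ⧸ K => x • q) (h • (x⁻¹ • ((x : G) : G ⧸ K))) :=
      keyf _ _ _ _ rfl (by rw [hp1, hp2])
    have eA : A = mfderiv J J (fun q : G ⧸ K => h • q) (x⁻¹ • ((x : G) : G ⧸ K)) :=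
      keyf _ _ _ _ rfl hp1.symm
    rw [hfun]
    rw [mfderiv_comp ((x : G ⧸ K)) (hd x _) ((hd h _).comp _ (hd x⁻¹ _))]
    rw [mfderiv_comp ((x : G ⧸ K)) (hd h _) (hd x⁻¹ _)]
    rw [eC, eA]
    rfl
  -- C ∘ C' is the derivative of the identity
  have hid : C.comp C' = ContinuousLinearMap.id ℝ F := by
    have hfun2 : (fun q : G ⧸ K => x • q) ∘ (fun q : G ⧸ K => x⁻¹ • q) = id := by
      funext q; simp [Function.comp, ← mul_smul]
    have hcc := mfderiv_comp ((x : G ⧸ K)) (f := fun q : G ⧸ K => x⁻¹ • q)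
      (g := fun q : G ⧸ K => x • q) (hd x _) (hd x⁻¹ _)
    have e1 : (mfderiv J J ((fun q : G ⧸ K => x • q) ∘ fun q : G ⧸ K => x⁻¹ • q)
        ((x : G ⧸ K)) : F →L[ℝ] F)
        = mfderiv J J (id : G ⧸ K → G ⧸ K) ((x : G ⧸ K)) := keyf _ _ _ _ hfun2 rfl
    have e2 : C = mfderiv J J (fun q : G ⧸ K => x • q) (x⁻¹ • ((x : G) : G ⧸ K)) :=
      keyf _ _ _ _ rfl hp1.symm
    rw [e2, hC']
    exact hcc.symm.trans (e1.trans (by rw [mfderiv_id]; rfl))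
  -- determinant computation
  rw [hchain]
  have expand : (ContinuousLinearMap.id ℝ F) - (C.comp A).comp C'
      = (C.comp ((ContinuousLinearMap.id ℝ F) - A)).comp C' := by
    rw [ContinuousLinearMap.comp_sub, ContinuousLinearMap.sub_comp]
    rw [ContinuousLinearMap.comp_id, hid]
  rw [expand]
  have : ((C.comp ((ContinuousLinearMap.id ℝ F) - A)).comp C').toLinearMap
      = C.toLinearMap ∘ₗ ((ContinuousLinearMap.id ℝ F) - A).toLinearMap ∘ₗ C'.toLinearMap := by
    rfl
  rw [this]
  rw [LinearMap.det_comp, LinearMap.det_comp]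
  have hdet : LinearMap.det C.toLinearMap * LinearMap.det C'.toLinearMap = 1 := by
    rw [← LinearMap.det_comp]
    have : C.toLinearMap ∘ₗ C'.toLinearMap = (C.comp C').toLinearMap := rfl
    rw [this, hid]
    simp
  ring_nf
  rw [mul_comm, ← mul_assoc, mul_comm (LinearMap.det C'.toLinearMap), hdet, one_mul]
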